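/- The homomorphism ν([x,y:r]) = exp(πi t ((x,x)+(y,y)-(x,y)+2r)) on the integral Heisenberg group H(L) is invariant under the SL(2,Z)-action A.[x,y:r] = [dx - cy, ay - bx : r], i.e. ν(A.[x,y:r]) = ν([x,y:r]) for all A = (a b; c d) ∈ SL(2,Z). -/
import Mathlib


open Complex

/-- The character value `ν([x,y:r]) = exp(πi t ((x,x)+(y,y)-(x,y)+2r))`. -/
noncomputable def heisNu {V : Type*} [AddCommGroup V] [Module ℝ V]
    (B : V →ₗ[ℝ] V →ₗ[ℝ] ℝ) (t : ℚ) (u w : V) (s : ℝ) : ℂ :=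
  Complex.exp (Real.pi * Complex.I * (t : ℝ) * ((B u u + B w w - B u w + 2 * s : ℝ) : ℂ))

lemma heisParity (a b c d : ℤ) (h : a * d - b * c = 1) :
    (∃ m : ℤ, d ^ 2 + b ^ 2 + b * d - 1 = 2 * m) ∧
    (∃ m : ℤ, a ^ 2 + c ^ 2 + a * c - 1 = 2 * m) := by
  have key : ∀ A B C D : ZMod 2, A * D - B * C = 1 →
      D ^ 2 + B ^ 2 + B * D - 1 = 0 ∧ A ^ 2 + C ^ 2 + A * C - 1 = 0 := by decide
  have h2 : ((a : ZMod 2)) * d - b * c = 1 := by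
    have := congrArg (fun n : ℤ => (n : ZMod 2)) h
    push_cast at this
    simpa using this
  obtain ⟨h3, h4⟩ := key a b c d h2
  constructor
  · have : ((d ^ 2 + b ^ 2 + b * d - 1 : ℤ) : ZMod 2) = 0 := by push_cast; simpa using h3
    obtain ⟨m, hm⟩ := (ZMod.intCast_zmod_eq_zero_iff_dvd _ 2).mp this
    exact ⟨m, by omega⟩
  · have : ((a ^ 2 + c ^ 2 + a * c - 1 : ℤ) : ZMod 2) = 0 := by push_cast; simpa using h4
    obtain ⟨m, hm⟩ := (ZMod.intCast_zmod_eq_zero_iff_dvd _ 2).mp this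
    exact ⟨m, by omega⟩

/-- The character `ν([x,y:r]) = exp(πi t ((x,x)+(y,y)-(x,y)+2r))` of the integral
Heisenberg group is invariant under the `SL(2,ℤ)`-action
`A.[x,y:r] = [dx - cy, ay - bx : r]`. -/
theorem heisNu_sl2_invariant (V : Type*) [AddCommGroup V] [Module ℝ V]
    (B : V →ₗ[ℝ] V →ₗ[ℝ] ℝ) (hB : ∀ u w : V, B u w = B w u)
    (L : Submodule ℤ V)
    (hposdef : ∀ u ∈ L, u ≠ 0 → 0 < B u u)
    (heven : ∀ u ∈ L, ∃ n : ℤ, B u u = 2 * (n : ℝ))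
    (t : ℚ) (ht : ∀ u ∈ L, ∀ w ∈ L, ∃ n : ℤ, (t : ℝ) * B u w = (n : ℝ))
    (a b c d : ℤ) (hdet : a * d - b * c = 1)
    (x y : V) (hx : x ∈ L) (hy : y ∈ L) (r : ℝ)
    (hr : ∃ n : ℤ, r + B x y / 2 = (n : ℝ)) :
    heisNu B t (d • x - c • y) (a • y - b • x) r = heisNu B t x y r := by
  obtain ⟨kx, hkx⟩ := ht x hx x hx
  obtain ⟨ky, hky⟩ := ht y hy y hy
  obtain ⟨kz, hkz⟩ := ht x hx y hy
  obtain ⟨⟨m1, hm1⟩, ⟨m2, hm2⟩⟩ := heisParity a b c d hdet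
  unfold heisNu
  rw [Complex.exp_eq_exp_iff_exists_int]
  refine ⟨m1 * kx + m2 * ky - (d * c + a * b + c * b) * kz, ?_⟩
  have hyx : B y x = B x y := hB y x
  simp only [map_sub, map_zsmul, LinearMap.sub_apply, LinearMap.smul_apply,
    zsmul_eq_mul, hyx]
  push_cast
  -- cast the integer facts to ℂ
  have hkx' : (t : ℂ) * (B x x : ℝ) = (kx : ℂ) := by exact_mod_cast congrArg Complex.ofReal hkx
  have hky' : (t : ℂ) * (B y y : ℝ) = (ky : ℂ) := by exact_mod_cast congrArg Complex.ofReal hky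
  have hkz' : (t : ℂ) * (B x y : ℝ) = (kz : ℂ) := by exact_mod_cast congrArg Complex.ofReal hkz
  have hdet' : (a : ℂ) * d - b * c = 1 := by exact_mod_cast congrArg (Int.cast : ℤ → ℂ) hdet
  have hm1' : (d : ℂ) ^ 2 + b ^ 2 + b * d - 1 = 2 * m1 := by
    exact_mod_cast congrArg (Int.cast : ℤ → ℂ) hm1
  have hm2' : (a : ℂ) ^ 2 + c ^ 2 + a * c - 1 = 2 * m2 := by
    exact_mod_cast congrArg (Int.cast : ℤ → ℂ) hm2
  set X : ℂ := ((B x x : ℝ) : ℂ)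
  set Y : ℂ := ((B y y : ℝ) : ℂ)
  set Z : ℂ := ((B x y : ℝ) : ℂ)
  linear_combination (Real.pi * Complex.I) *
    ((2 * (m1 : ℂ)) * hkx' + (2 * (m2 : ℂ)) * hky'
      - (2 * ((d : ℂ) * c + a * b + c * b)) * hkz'
      + ((t : ℂ) * X) * hm1' + ((t : ℂ) * Y) * hm2'
      + (-(t : ℂ) * Z) * hdet')
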